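/- Let I ⊆ F[x,y] be an ideal, y₀ ∈ F, and suppose I is generated by g₁,…,g_k where g₁ = (x−x₀)⋯(x−x_m) for distinct x₀,…,x_m ∈ F and g₂,…,g_k ∈ ⟨y − y₀⟩. Then I ∩ ⟨y − y₀⟩ = ⟨g₂,…,g_k⟩ + ⟨g₁·(y−y₀)⟩, and consequently I : ⟨y − y₀⟩ ⊇ ⟨g₂/(y−y₀), …, g_k/(y−y₀), g₁⟩. -/

import Mathlib

open MvPolynomial

private lemma prime_Xsub {F : Type*} [Field F] (y0 : F) :
    Prime (X 1 - C y0 : MvPolynomial (Fin 2) F) := by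
  let e : MvPolynomial (Fin 2) F ≃* Polynomial (MvPolynomial (Fin 1) F) :=
    ((renameEquiv F (Equiv.swap (0 : Fin 2) 1)).trans (finSuccEquiv F 1)).toMulEquiv
  rw [← MulEquiv.prime_iff e]
  have : e (X 1 - C y0) = Polynomial.X - Polynomial.C (C y0) := by
    simp [e, map_sub, finSuccEquiv_apply, eval₂Hom_X']
  rw [this]
  exact Polynomial.prime_X_sub_C _

private lemma not_dvd_Xsub {F : Type*} [Field F] (y0 c : F) :
    ¬ (X 1 - C y0 : MvPolynomial (Fin 2) F) ∣ (X 0 - C c) := by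
  intro h
  have := (aeval (fun i : Fin 2 => if i = 0 then Polynomial.X else Polynomial.C y0) :
    MvPolynomial (Fin 2) F →ₐ[F] Polynomial F).toRingHom.map_dvd h
  simp only [AlgHom.toRingHom_eq_coe, RingHom.coe_coe, map_sub, aeval_X, aeval_C] at this
  norm_num [Polynomial.algebraMap_eq] at this
  exact Polynomial.X_sub_C_ne_zero c (by simpa using this)

theorem stmt_17 {F : Type*} [Field F]
    (I : Ideal (MvPolynomial (Fin 2) F)) (y0 : F) (k m : ℕ) (x : ℕ → F)
    (hx : ∀ i i', i ≤ m → i' ≤ m → x i = x i' → i = i')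
    (g q : Fin (k + 1) → MvPolynomial (Fin 2) F)
    (hI : I = Ideal.span (Set.range g))
    (hg0 : g 0 = ∏ i ∈ Finset.range (m + 1), (X 0 - C (x i)))
    (hq : ∀ i, i ≠ 0 → g i = (X 1 - C y0) * q i) :
    I ⊓ Ideal.span {X 1 - C y0} =
        Ideal.span ({h | ∃ i, i ≠ 0 ∧ h = g i} ∪ {g 0 * (X 1 - C y0)}) ∧
      Ideal.span ({h | ∃ i, i ≠ 0 ∧ h = q i} ∪ {g 0}) ≤
        I.colon ((Ideal.span {X 1 - C y0} : Ideal (MvPolynomial (Fin 2) F)) :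
          Set (MvPolynomial (Fin 2) F)) := by
  set p : MvPolynomial (Fin 2) F := X 1 - C y0 with hp
  have hprime : Prime p := prime_Xsub y0
  have hnd : ¬ p ∣ g 0 := by
    rw [hg0]
    intro h
    obtain ⟨i, -, hi⟩ := (hprime.dvd_finset_prod_iff _).1 h
    exact not_dvd_Xsub y0 (x i) hi
  have hgI : ∀ i, g i ∈ I := fun i => hI ▸ Ideal.subset_span ⟨i, rfl⟩
  constructor
  · apply le_antisymm
    · rintro f ⟨hfI, hfp⟩
      rw [SetLike.mem_coe, hI, Ideal.mem_span_range_iff_exists_fun] at hfI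
      obtain ⟨c, hc⟩ := hfI
      rw [SetLike.mem_coe, Ideal.mem_span_singleton] at hfp
      have hsum : f = c 0 * g 0 + ∑ i : Fin k, c i.succ * g i.succ := by
        rw [← hc, Fin.sum_univ_succ]
      have hdvd2 : p ∣ ∑ i : Fin k, c i.succ * g i.succ := by
        apply Finset.dvd_sum
        intro i _
        exact Dvd.dvd.mul_left ⟨q i.succ, hq i.succ (Fin.succ_ne_zero i)⟩ _
      have hdvd0 : p ∣ c 0 * g 0 := by
        have : c 0 * g 0 = f - ∑ i : Fin k, c i.succ * g i.succ := by rw [hsum]; ring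
        rw [this]; exact dvd_sub hfp hdvd2
      have hc0 : p ∣ c 0 := ((hprime.dvd_mul.1 hdvd0).resolve_right hnd)
      obtain ⟨d, hd⟩ := hc0
      rw [hsum, hd]
      apply Ideal.add_mem
      · have : p * d * g 0 = d * (g 0 * p) := by ring
        rw [this]
        exact Ideal.mul_mem_left _ _ (Ideal.subset_span (Set.mem_union_right _ rfl))
      · apply Ideal.sum_mem
        intro i _
        exact Ideal.mul_mem_left _ _
          (Ideal.subset_span (Set.mem_union_left _ ⟨i.succ, Fin.succ_ne_zero i, rfl⟩))
    · rw [Ideal.span_le]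
      rintro f (⟨i, hi0, rfl⟩ | rfl)
      · exact ⟨hgI i, Ideal.mem_span_singleton.2 ⟨q i, hq i hi0⟩⟩
      · exact ⟨Ideal.mul_mem_right _ _ (hgI 0),
          Ideal.mem_span_singleton.2 (Dvd.intro_left _ rfl)⟩
  · rw [Ideal.span_le]
    rintro f (⟨i, hi0, rfl⟩ | rfl)
    · rw [SetLike.mem_coe, Ideal.mem_colon_span_singleton, mul_comm, ← hq i hi0]
      exact hgI i
    · rw [SetLike.mem_coe, Ideal.mem_colon_span_singleton]
      exact Ideal.mul_mem_right _ _ (hgI 0)
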